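/- Let G = {(A_t, u(e₁+e₂) + v e₃) | t, u, v ∈ ℝ} act on ℝ³ by (A,a)·x = Ax + a. For a point p = (x₀, y₀, z₀) with x₀ ≠ y₀, the orbit of p is the open half-space {(a,b,c) ∈ ℝ³ | (a-b)(x₀-y₀) > 0}. In particular there are exactly two open orbits. -/

import Mathlib

/-- A_t = (cosh t)(E₁₁+E₂₂) + (sinh t)(E₁₂+E₂₁) + E₃₃ -/
noncomputable def At (t : ℝ) : Matrix (Fin 3) (Fin 3) ℝ :=
  !![Real.cosh t, Real.sinh t, 0; Real.sinh t, Real.cosh t, 0; 0, 0, 1]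

/-- The action of the element with parameters (t,u,v) of
G = {(A_t, u(e₁+e₂)+v e₃)} on x ∈ ℝ³. -/
noncomputable def act (t u v : ℝ) (x : Fin 3 → ℝ) : Fin 3 → ℝ :=
  (At t).mulVec x + u • ![1, 1, 0] + v • ![0, 0, 1]

/-- The orbit of p with p₀ ≠ p₁ under G = {(A_t, u(e₁+e₂)+v e₃)}. -/
noncomputable def orbit (p : Fin 3 → ℝ) : Set (Fin 3 → ℝ) :=
  {q | ∃ t u v : ℝ, q = act t u v p}

lemma act_apply0 (t u v : ℝ) (p : Fin 3 → ℝ) :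
    act t u v p 0 = Real.cosh t * p 0 + Real.sinh t * p 1 + u := by
  simp [act, At, Matrix.mulVec, dotProduct, Fin.sum_univ_three]

lemma act_apply1 (t u v : ℝ) (p : Fin 3 → ℝ) :
    act t u v p 1 = Real.sinh t * p 0 + Real.cosh t * p 1 + u := by
  simp [act, At, Matrix.mulVec, dotProduct, Fin.sum_univ_three]

lemma act_apply2 (t u v : ℝ) (p : Fin 3 → ℝ) :
    act t u v p 2 = p 2 + v := by
  simp [act, At, Matrix.mulVec, dotProduct, Fin.sum_univ_three]

lemma orbit_eq (p : Fin 3 → ℝ) (h : p 0 ≠ p 1) :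
    orbit p = {q : Fin 3 → ℝ | (q 0 - q 1) * (p 0 - p 1) > 0} := by
  have hd : p 0 - p 1 ≠ 0 := sub_ne_zero.mpr h
  ext q
  simp only [orbit, Set.mem_setOf_eq]
  constructor
  · rintro ⟨t, u, v, rfl⟩
    have hdiff : act t u v p 0 - act t u v p 1 = Real.exp (-t) * (p 0 - p 1) := by
      rw [act_apply0, act_apply1, ← Real.cosh_sub_sinh]
      ring
    rw [hdiff]
    have : Real.exp (-t) * (p 0 - p 1) * (p 0 - p 1)
        = Real.exp (-t) * (p 0 - p 1) ^ 2 := by ring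
    rw [this]
    positivity
  · intro hq
    set r : ℝ := (q 0 - q 1) / (p 0 - p 1) with hr
    have hrpos : 0 < r := by
      have : r = (q 0 - q 1) * (p 0 - p 1) / (p 0 - p 1) ^ 2 := by
        rw [hr, eq_div_iff (pow_ne_zero 2 hd), div_mul_eq_mul_div, div_eq_iff hd]; ring
      rw [this]
      positivity
    set t : ℝ := -Real.log r with ht
    have hexp : Real.exp (-t) = r := by
      rw [ht, neg_neg, Real.exp_log hrpos]
    have hrmul : r * (p 0 - p 1) = q 0 - q 1 := div_mul_cancel₀ _ hd
    refine ⟨t, q 0 - Real.cosh t * p 0 - Real.sinh t * p 1, q 2 - p 2, ?_⟩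
    funext i
    fin_cases i
    · show q 0 = act t _ _ p 0
      rw [act_apply0]; ring
    · show q 1 = act t _ _ p 1
      rw [act_apply1]
      have hcs : Real.cosh t - Real.sinh t = r := by rw [Real.cosh_sub_sinh, hexp]
      linear_combination (p 0 - p 1) * hcs + hrmul
    · show q 2 = act t _ _ p 2
      rw [act_apply2]; ring

/-- For p = (x₀,y₀,z₀) with x₀ ≠ y₀ the orbit is the open half-space
{(a,b,c) | (a-b)(x₀-y₀) > 0}; in particular there are exactly two such (open) orbits. -/
theorem orbit_case_iii_open (x₀ y₀ z₀ : ℝ) (h : x₀ ≠ y₀) :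
    orbit ![x₀, y₀, z₀] = {q : Fin 3 → ℝ | (q 0 - q 1) * (x₀ - y₀) > 0} ∧
    ∃ O₁ O₂ : Set (Fin 3 → ℝ), O₁ ≠ O₂ ∧ IsOpen O₁ ∧ IsOpen O₂ ∧
      ∀ p : Fin 3 → ℝ, p 0 ≠ p 1 → orbit p = O₁ ∨ orbit p = O₂ := by
  constructor
  · have := orbit_eq ![x₀, y₀, z₀] (by simpa using h)
    simpa using this
  · refine ⟨{q : Fin 3 → ℝ | q 1 < q 0}, {q : Fin 3 → ℝ | q 0 < q 1}, ?_, ?_, ?_, ?_⟩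
    · intro heq
      have h1 : (![(1:ℝ), 0, 0]) ∈ {q : Fin 3 → ℝ | q 1 < q 0} := by norm_num
      rw [heq] at h1
      norm_num at h1
    · exact isOpen_lt (continuous_apply 1) (continuous_apply 0)
    · exact isOpen_lt (continuous_apply 0) (continuous_apply 1)
    · intro p hp
      rw [orbit_eq p hp]
      rcases lt_or_gt_of_ne (sub_ne_zero.mpr hp) with hlt | hgt
      · right; ext q; simp only [Set.mem_setOf_eq]
        constructor
        · intro hq; nlinarith
        · intro hq; nlinarith
      · left; ext q; simp only [Set.mem_setOf_eq]
        constructor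
        · intro hq; nlinarith
        · intro hq; nlinarith
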